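/- Let h(x_1,…,x_s) = sgn(Σ_{i≤s} w_i x_i − θ) be an unweighted majority gate (|w_i| = 1 for all i, |θ| ≤ s+1, θ a half-integer). Let f, g_1, …, g_s : {-1,1}^n → {-1,1} satisfy Corr(f, g_i) ≤ 1/(16s) for all i and Corr(f, 1) ≤ 1/(16s) where 1 is the constant-1 function. Then Corr(f, h(g_1,…,g_s)) ≤ 1 − 1/(8s). -/

import Mathlib

lemma stmt14_key {α : Type*} [Fintype α] (s : ℕ) (hs : 1 ≤ s)
    (F H T : α → ℝ)
    (hF : ∀ x, F x = 1 ∨ F x = -1)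
    (hH : ∀ x, H x = 1 ∨ H x = -1)
    (hHT : ∀ x, 1/2 ≤ H x * T x)
    (hM : ∀ x, |T x| ≤ 2*(s:ℝ) + 3/2)
    (hFT : (16*(s:ℝ)) * ∑ x, F x * T x ≤ (Fintype.card α : ℝ) * (2*(s:ℝ) + 3/2)) :
    (8*(s:ℝ)) * ∑ x, F x * H x ≤ (Fintype.card α : ℝ) * (8*(s:ℝ) - 1) := by
  classical
  by_contra hcon
  push_neg at hcon
  set C : ℝ := (Fintype.card α : ℝ) with hCdef
  set P : Finset α := Finset.univ.filter (fun x => F x = H x) with hPdef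
  set Q : Finset α := Finset.univ.filter (fun x => ¬ F x = H x) with hQdef
  have hPQ : (P.card : ℝ) + (Q.card : ℝ) = C := by
    rw [hCdef, ← Finset.card_univ (α := α)]
    exact_mod_cast congrArg (Nat.cast (R := ℝ))
      (Finset.card_filter_add_card_filter_not (s := (Finset.univ : Finset α))
        (p := fun x => F x = H x))
  have hsplit := Finset.sum_filter_add_sum_filter_not Finset.univ
    (fun x => F x = H x) (fun x => F x * H x)
  have hsplitT := Finset.sum_filter_add_sum_filter_not Finset.univ
    (fun x => F x = H x) (fun x => F x * T x)
  have eP : ∑ x ∈ P, F x * H x = (P.card : ℝ) := by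
    rw [Finset.sum_congr rfl (fun x hx => ?_), Finset.sum_const, nsmul_eq_mul, mul_one]
    · have hx' : F x = H x := (Finset.mem_filter.mp hx).2
      rcases hH x with h | h <;> rw [hx', h] <;> norm_num
  have eQ : ∑ x ∈ Q, F x * H x = -(Q.card : ℝ) := by
    have : ∀ x ∈ Q, F x * H x = -1 := by
      intro x hx
      have hx' : ¬ F x = H x := (Finset.mem_filter.mp hx).2
      rcases hF x with h1 | h1 <;> rcases hH x with h2 | h2 <;>
        rw [h1, h2] <;> first | (exfalso; rw [h1, h2] at hx'; exact hx' rfl) | norm_num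
    rw [Finset.sum_congr rfl this, Finset.sum_const, nsmul_eq_mul]
    ring
  have hFH : ∑ x, F x * H x = (P.card : ℝ) - (Q.card : ℝ) := by
    rw [← hsplit, ← hPdef, ← hQdef, eP, eQ]; ring
  have lP : (P.card : ℝ) * (1/2) ≤ ∑ x ∈ P, F x * T x := by
    have := Finset.card_nsmul_le_sum P (fun x => F x * T x) (1/2) (fun x hx => by
      have hx' : F x = H x := (Finset.mem_filter.mp hx).2
      show 1/2 ≤ F x * T x; rw [hx']; exact hHT x)
    rwa [nsmul_eq_mul] at this
  have lQ : (Q.card : ℝ) * (-(2*(s:ℝ) + 3/2)) ≤ ∑ x ∈ Q, F x * T x := by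
    have := Finset.card_nsmul_le_sum Q (fun x => F x * T x) (-(2*(s:ℝ) + 3/2)) (fun x hx => by
      have h1 : |F x * T x| = |T x| := by
        rcases hF x with h | h <;> rw [h] <;> simp
      have h2 : |F x * T x| ≤ 2*(s:ℝ) + 3/2 := by rw [h1]; exact hM x
      show -(2*(s:ℝ) + 3/2) ≤ F x * T x
      linarith [(abs_le.mp h2).1])
    rwa [nsmul_eq_mul] at this
  have hFTlb : (P.card : ℝ) * (1/2) - (Q.card : ℝ) * (2*(s:ℝ) + 3/2) ≤ ∑ x, F x * T x := by
    rw [← hsplitT, ← hPdef, ← hQdef]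
    nlinarith [lP, lQ]
  rw [hFH] at hcon
  have hQ0 : (0:ℝ) ≤ (Q.card : ℝ) := Nat.cast_nonneg _
  have hs1 : (1:ℝ) ≤ (s : ℝ) := by exact_mod_cast hs
  have hB : (P.card : ℝ) = C - (Q.card : ℝ) := by linarith
  rw [hB] at hcon hFTlb
  -- hcon : C * (8s - 1) < 8s * ((C - A) - A), so 16 s A < C
  have hA : 16*(s:ℝ)*(Q.card : ℝ) < C := by nlinarith [hcon]
  have hC0 : (0:ℝ) < C := lt_of_le_of_lt (by positivity) hA
  have hmul := mul_le_mul_of_nonneg_left hFTlb (show (0:ℝ) ≤ 16*(s:ℝ) by positivity)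
  have hmain : 16*(s:ℝ) * ((C - (Q.card:ℝ)) * (1/2) - (Q.card:ℝ) * (2*(s:ℝ) + 3/2))
      ≤ C * (2*(s:ℝ) + 3/2) := hmul.trans hFT
  nlinarith [hmain, hA, hQ0, hs1, hC0,
    mul_lt_mul_of_pos_left hA (show (0:ℝ) < 2*((s:ℝ)+1) by positivity),
    mul_le_mul_of_nonneg_right hs1 (le_of_lt hC0)]

lemma stmt14_aux {α : Type*} [Fintype α] (s : ℕ) (hs : 1 ≤ s)
    (w : Fin s → ℝ) (θ : ℝ) (hw : ∀ i, |w i| = 1) (hθ : |θ| ≤ (s : ℝ) + 1)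
    (F : α → ℝ) (G : Fin s → α → ℝ)
    (hF : ∀ x, F x = 1 ∨ F x = -1)
    (hG : ∀ i x, G i x = 1 ∨ G i x = -1)
    (hcorr : ∀ i, |∑ x, F x * G i x| ≤ (Fintype.card α : ℝ) / (16*(s:ℝ)))
    (hconst : |∑ x, F x| ≤ (Fintype.card α : ℝ) / (16*(s:ℝ))) :
    |∑ x, F x * (if 0 < (∑ i, w i * G i x) - θ then (1:ℝ) else -1)|
      ≤ (Fintype.card α : ℝ) * (1 - 1/(8*(s:ℝ))) := by
  classical
  obtain ⟨S, hS⟩ : ∃ S : α → ℝ, ∀ x, S x = ∑ i, w i * G i x := ⟨_, fun _ => rfl⟩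
  obtain ⟨Hm, hHm⟩ : ∃ Hm : α → ℝ, ∀ x, Hm x = if 0 < S x - θ then (1:ℝ) else -1 :=
    ⟨_, fun _ => rfl⟩
  have hgoal : ∑ x, F x * (if 0 < (∑ i, w i * G i x) - θ then (1:ℝ) else -1)
      = ∑ x, F x * Hm x :=
    Finset.sum_congr rfl (fun x _ => by rw [hHm, hS])
  rw [hgoal]
  set c : ℝ := (⌊θ⌋ : ℝ) + 1/2 with hcdef
  obtain ⟨T, hT⟩ : ∃ T : α → ℝ, ∀ x, T x = S x - c := ⟨_, fun _ => rfl⟩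
  set C : ℝ := (Fintype.card α : ℝ) with hCdef
  have hs1 : (1:ℝ) ≤ (s:ℝ) := by exact_mod_cast hs
  have h16 : (0:ℝ) < 16*(s:ℝ) := by positivity
  have h8 : (0:ℝ) < 8*(s:ℝ) := by positivity
  -- each w i * G i x is ±1
  have hwG : ∀ i x, w i * G i x = 1 ∨ w i * G i x = -1 := by
    intro i x
    rcases (abs_eq (by norm_num : (0:ℝ) ≤ 1)).mp (hw i) with h | h <;>
      rcases hG i x with h2 | h2 <;> rw [h, h2] <;> norm_num
  -- S x is an integer
  have hSint : ∀ x, ∃ k : ℤ, S x = (k : ℝ) := by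
    intro x
    refine ⟨∑ i, (if 0 < w i * G i x then (1:ℤ) else -1), ?_⟩
    rw [hS]
    push_cast
    refine Finset.sum_congr rfl (fun i _ => ?_)
    rcases hwG i x with h | h <;> rw [h] <;> norm_num
  -- |T x| ≥ 1/2
  have hT_half : ∀ x, 1/2 ≤ |T x| := by
    intro x
    obtain ⟨k, hk⟩ := hSint x
    have hTx : T x = ((k - ⌊θ⌋ : ℤ) : ℝ) - 1/2 := by
      rw [hT, hk, hcdef]; push_cast; ring
    rcases le_or_gt (k - ⌊θ⌋) 0 with h | h
    · have h' : ((k - ⌊θ⌋ : ℤ) : ℝ) ≤ 0 := by exact_mod_cast h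
      rw [hTx, abs_of_nonpos (by linarith)]; linarith
    · have h' : (1:ℝ) ≤ ((k - ⌊θ⌋ : ℤ) : ℝ) := by exact_mod_cast h
      rw [hTx, abs_of_nonneg (by linarith)]; linarith
  -- sign agreement
  have hiff : ∀ x, (0 < S x - θ) ↔ 0 < T x := by
    intro x
    obtain ⟨k, hk⟩ := hSint x
    constructor
    · intro h
      have hθk : θ < (k : ℝ) := by rw [hk] at h; linarith
      have h2 : ⌊θ⌋ < k := Int.floor_lt.mpr hθk
      have h3 : (⌊θ⌋ : ℝ) + 1 ≤ (k : ℝ) := by exact_mod_cast h2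
      rw [hT, hk, hcdef]; linarith
    · intro h
      rw [hT, hk, hcdef] at h
      have h2 : (⌊θ⌋ : ℝ) < (k : ℝ) := by linarith
      have h3 : ⌊θ⌋ < k := by exact_mod_cast h2
      have h4 : θ < (k : ℝ) := by
        calc θ < (⌊θ⌋ : ℝ) + 1 := Int.lt_floor_add_one θ
        _ ≤ (k : ℝ) := by exact_mod_cast h3
      rw [hk]; linarith
  have hH1 : ∀ x, Hm x = 1 ∨ Hm x = -1 := by
    intro x; rw [hHm]; by_cases h : 0 < S x - θ <;> simp [h]
  have hHT : ∀ x, 1/2 ≤ Hm x * T x := by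
    intro x
    by_cases h : 0 < S x - θ
    · have hp := (hiff x).mp h
      have := hT_half x
      rw [abs_of_pos hp] at this
      rw [hHm, if_pos h, one_mul]; exact this
    · have hp : ¬ 0 < T x := fun hc => h ((hiff x).mpr hc)
      push_neg at hp
      have := hT_half x
      rw [abs_of_nonpos hp] at this
      rw [hHm, if_neg h, neg_one_mul]; linarith
  -- |T x| ≤ 2s + 3/2
  have hMb : ∀ x, |T x| ≤ 2*(s:ℝ) + 3/2 := by
    intro x
    have hSb : |S x| ≤ (s:ℝ) := by
      rw [hS]
      calc |∑ i, w i * G i x| ≤ ∑ i, |w i * G i x| := Finset.abs_sum_le_sum_abs _ _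
      _ = ∑ _i : Fin s, (1:ℝ) :=
        Finset.sum_congr rfl (fun i _ => by rcases hwG i x with h | h <;> rw [h] <;> norm_num)
      _ = (s:ℝ) := by simp
    have hf1 : (⌊θ⌋ : ℝ) ≤ θ := Int.floor_le θ
    have hf2 : θ - 1 < (⌊θ⌋ : ℝ) := by linarith [Int.lt_floor_add_one θ]
    have hθ' := abs_le.mp hθ
    have hcb : |c| ≤ (s:ℝ) + 3/2 := by
      rw [hcdef, abs_le]; constructor <;> [linarith [hθ'.1]; linarith [hθ'.2]]
    have h1 : |T x| ≤ |S x| + |c| := by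
      rw [hT]
      calc |S x - c| = |S x + -c| := by ring_nf
      _ ≤ |S x| + |(-c)| := abs_add_le _ _
      _ = |S x| + |c| := by rw [abs_neg]
    linarith
  -- bound on | Σ F T |
  have hsplitFT : ∑ x, F x * T x
      = ∑ i, w i * (∑ x, F x * G i x) - c * ∑ x, F x := by
    have h1 : ∀ x, F x * T x = (∑ i, w i * (F x * G i x)) - c * F x := by
      intro x
      rw [hT, hS, mul_sub, Finset.mul_sum]
      congr 1
      · exact Finset.sum_congr rfl (fun i _ => by ring)
      · ring
    rw [Finset.sum_congr rfl (fun x _ => h1 x), Finset.sum_sub_distrib,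
      Finset.sum_comm, ← Finset.mul_sum]
    congr 1
    exact Finset.sum_congr rfl (fun i _ => by rw [Finset.mul_sum])
  have habsFT : |∑ x, F x * T x| ≤ (2*(s:ℝ) + 3/2) * (C / (16*(s:ℝ))) := by
    rw [hsplitFT]
    have h1 : |∑ i, w i * (∑ x, F x * G i x)| ≤ (s:ℝ) * (C / (16*(s:ℝ))) := by
      calc |∑ i, w i * (∑ x, F x * G i x)| ≤ ∑ i, |w i * (∑ x, F x * G i x)| :=
        Finset.abs_sum_le_sum_abs _ _
      _ ≤ ∑ _i : Fin s, C / (16*(s:ℝ)) := by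
        refine Finset.sum_le_sum (fun i _ => ?_)
        rw [abs_mul, hw i, one_mul]
        exact hcorr i
      _ = (s:ℝ) * (C / (16*(s:ℝ))) := by simp [mul_comm]
    have hcb : |c| ≤ (s:ℝ) + 3/2 := by
      have hf1 : (⌊θ⌋ : ℝ) ≤ θ := Int.floor_le θ
      have hf2 : θ - 1 < (⌊θ⌋ : ℝ) := by linarith [Int.lt_floor_add_one θ]
      have hθ' := abs_le.mp hθ
      rw [hcdef, abs_le]; constructor <;> [linarith [hθ'.1]; linarith [hθ'.2]]
    have h2 : |c * ∑ x, F x| ≤ ((s:ℝ) + 3/2) * (C / (16*(s:ℝ))) := by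
      rw [abs_mul]
      have hC0 : (0:ℝ) ≤ C / (16*(s:ℝ)) := by positivity
      exact mul_le_mul hcb hconst (abs_nonneg _) (by linarith)
    have h3 : |∑ i, w i * (∑ x, F x * G i x) - c * ∑ x, F x|
        ≤ |∑ i, w i * (∑ x, F x * G i x)| + |c * ∑ x, F x| := by
      have h4 := abs_add_le (∑ i, w i * (∑ x, F x * G i x)) (-(c * ∑ x, F x))
      rw [abs_neg] at h4
      simpa [sub_eq_add_neg] using h4
    linarith
  have hident : (16*(s:ℝ)) * ((2*(s:ℝ) + 3/2) * (C / (16*(s:ℝ)))) = C * (2*(s:ℝ) + 3/2) := by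
    field_simp
  have hkey1 : (8*(s:ℝ)) * ∑ x, F x * Hm x ≤ C * (8*(s:ℝ) - 1) := by
    apply stmt14_key s hs F Hm T hF hH1 hHT hMb
    have := mul_le_mul_of_nonneg_left ((le_abs_self _).trans habsFT) (le_of_lt h16)
    rw [hident] at this
    exact this
  have hkey2 : (8*(s:ℝ)) * ∑ x, (-F x) * Hm x ≤ C * (8*(s:ℝ) - 1) := by
    apply stmt14_key s hs (fun x => -F x) Hm T
      (fun x => by
        show -F x = 1 ∨ -F x = -1
        rcases hF x with h | h <;> rw [h] <;> norm_num) hH1 hHT hMb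
    have hneg : ∑ x, (-F x) * T x = -∑ x, F x * T x := by
      rw [← Finset.sum_neg_distrib]
      exact Finset.sum_congr rfl (fun x _ => by ring)
    show 16*(s:ℝ) * ∑ x, (-F x) * T x ≤ C * (2*(s:ℝ) + 3/2)
    rw [hneg]
    have := mul_le_mul_of_nonneg_left ((neg_le_abs _).trans habsFT) (le_of_lt h16)
    rw [hident] at this
    linarith
  have hneg2 : ∑ x, (-F x) * Hm x = -∑ x, F x * Hm x := by
    rw [← Finset.sum_neg_distrib]
    exact Finset.sum_congr rfl (fun x _ => by ring)
  rw [hneg2] at hkey2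
  have hident2 : (8*(s:ℝ)) * (C * (1 - 1/(8*(s:ℝ)))) = C * (8*(s:ℝ) - 1) := by
    field_simp
  rw [abs_le]
  constructor
  · rw [← hident2] at hkey2
    nlinarith [hkey2, h8]
  · rw [← hident2] at hkey1
    nlinarith [hkey1, h8]

/-- let `h` be an unweighted majority gate of fan-in `s` (weights
`±1`, half-integer threshold `θ` with `|θ| ≤ s+1`). If `Corr(f, gᵢ) ≤ 1/(16s)`
for all `i` and `Corr(f, 1) ≤ 1/(16s)`, then `Corr(f, h(g₁,…,g_s)) ≤ 1 − 1/(8s)`.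
(Here `h(g₁,…,g_s)(x) = sgn(Σᵢ wᵢ gᵢ(x) − θ)` with `sgn 0 = -1`, and Boolean
values are `±1` via `if · then 1 else -1`.) -/
theorem stmt_14 (n s : ℕ) (hs : 1 ≤ s) (w : Fin s → ℝ) (θ : ℝ)
    (hw : ∀ i, |w i| = 1) (hθ : |θ| ≤ (s : ℝ) + 1) (hθhalf : ∃ z : ℤ, θ = z / 2)
    (f : (Fin n → Bool) → Bool) (g : Fin s → (Fin n → Bool) → Bool)
    (hcorr : ∀ i : Fin s,
      |(∑ x : Fin n → Bool,
          (if f x then (1 : ℝ) else -1) * (if g i x then (1 : ℝ) else -1)) / 2 ^ n|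
        ≤ 1 / (16 * s))
    (hconst : |(∑ x : Fin n → Bool, (if f x then (1 : ℝ) else -1)) / 2 ^ n|
        ≤ 1 / (16 * s)) :
    |(∑ x : Fin n → Bool,
        (if f x then (1 : ℝ) else -1) *
          (if 0 < (∑ i, w i * (if g i x then (1 : ℝ) else -1)) - θ then (1 : ℝ) else -1))
        / 2 ^ n|
      ≤ 1 - 1 / (8 * s) := by
  have h2n : (0:ℝ) < 2 ^ n := by positivity
  have h16 : (0:ℝ) < 16 * s := by
    have : (1:ℝ) ≤ s := by exact_mod_cast hs
    positivity
  have hcard : ((Fintype.card (Fin n → Bool)) : ℝ) = 2 ^ n := by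
    simp [Fintype.card_fun]
  have conv : ∀ y : ℝ, |y / 2 ^ n| ≤ 1 / (16 * s) →
      |y| ≤ ((Fintype.card (Fin n → Bool)) : ℝ) / (16 * s) := by
    intro y hy
    rw [abs_div, abs_of_pos h2n, div_le_div_iff₀ h2n h16] at hy
    rw [hcard, le_div_iff₀ h16]
    linarith
  have hmain := stmt14_aux (α := Fin n → Bool) s hs w θ hw hθ
    (fun x => if f x then (1:ℝ) else -1)
    (fun i x => if g i x then (1:ℝ) else -1)
    (fun x => by by_cases h : f x <;> simp [h])
    (fun i x => by by_cases h : g i x <;> simp [h])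
    (fun i => conv _ (hcorr i))
    (conv _ hconst)
  rw [hcard] at hmain
  rw [abs_div, abs_of_pos h2n, div_le_iff₀ h2n]
  calc |∑ x : Fin n → Bool,
      (if f x then (1 : ℝ) else -1) *
        (if 0 < (∑ i, w i * (if g i x then (1 : ℝ) else -1)) - θ then (1 : ℝ) else -1)|
      ≤ (2:ℝ) ^ n * (1 - 1 / (8 * s)) := hmain
  _ = (1 - 1 / (8 * s)) * 2 ^ n := by ring
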